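/- arXiv:0907.2510 — 5 statements merged into one kernel-verified Lean document; each statement's English description precedes it below -/
import Mathlib

section
/- Let K be a positive integer and let p : {1,…,K} × {1,…,K} → ℝ satisfy 0 ≤ p(j,i) ≤ 1 for all j,i and p(k,k) = 1/2 for every k. Define w(H) = ∏_{j,i} (p(j,i) if H_{j,i} = 1 else 1 − p(j,i)) for H ∈ F₂^{K×K}. Then ∑_{H ∈ F₂^{K×K}} min{w(H), w(H + I)} = 1, where I is the K×K identity matrix over F₂ and the sum ranges over all 2^{K²} matrices. -/
/-- When the direct channel probabilities equal `1/2`, the total weight of the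
paper's block Markov pairing (pairing each channel instance `H` with `H + I`)
sums to one, so each user achieves rate `1/2`. -/
theorem sum_min_weight_eq_one (K : ℕ) (hK : 0 < K) (p : Fin K → Fin K → ℝ)
    (hp0 : ∀ j i, 0 ≤ p j i) (hp1 : ∀ j i, p j i ≤ 1)
    (hp : ∀ k, p k k = 1 / 2) :
    ∑ H : Matrix (Fin K) (Fin K) (ZMod 2),
      min (∏ j : Fin K, ∏ i : Fin K, if H j i = 1 then p j i else 1 - p j i)
        (∏ j : Fin K, ∏ i : Fin K, if (H + 1) j i = 1 then p j i else 1 - p j i)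
      = 1 := by
  set g : Fin K → Fin K → ZMod 2 → ℝ := fun j i x => if x = 1 then p j i else 1 - p j i
    with hg
  have hsame : ∀ H : Matrix (Fin K) (Fin K) (ZMod 2),
      (∏ j : Fin K, ∏ i : Fin K, g j i ((H + 1) j i))
        = ∏ j : Fin K, ∏ i : Fin K, g j i (H j i) := by
    intro H
    refine Finset.prod_congr rfl fun j _ => Finset.prod_congr rfl fun i _ => ?_
    by_cases hij : j = i
    · subst hij
      have : g j j ((H + 1) j j) = 1 / 2 := by
        simp only [hg]; split <;> rw [hp] <;> norm_num
      rw [this]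
      simp only [hg]; split <;> rw [hp] <;> norm_num
    · have : (H + 1) j i = H j i := by
        simp [Matrix.add_apply, Matrix.one_apply, hij]
      rw [this]
  have hmin : ∀ H : Matrix (Fin K) (Fin K) (ZMod 2),
      min (∏ j : Fin K, ∏ i : Fin K, if H j i = 1 then p j i else 1 - p j i)
        (∏ j : Fin K, ∏ i : Fin K, if (H + 1) j i = 1 then p j i else 1 - p j i)
        = ∏ j : Fin K, ∏ i : Fin K, g j i (H j i) := by
    intro H
    have := hsame H
    simp only [hg] at this ⊢
    rw [this, min_self]
  rw [Finset.sum_congr rfl fun H _ => hmin H]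
  have key : (∑ H : Matrix (Fin K) (Fin K) (ZMod 2),
      ∏ j : Fin K, ∏ i : Fin K, g j i (H j i))
      = ∏ j : Fin K, ∏ i : Fin K, ∑ x : ZMod 2, g j i x := by
    rw [show (∏ j : Fin K, ∏ i : Fin K, ∑ x : ZMod 2, g j i x)
        = ∏ j : Fin K, ∑ r : Fin K → ZMod 2, ∏ i, g j i (r i) from
      Finset.prod_congr rfl fun j _ => Fintype.prod_sum fun i x => g j i x,
      Fintype.prod_sum fun j (r : Fin K → ZMod 2) => ∏ i, g j i (r i)]
    rfl
  rw [key]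
  have hx : ∀ j i, (∑ x : ZMod 2, g j i x) = 1 := by
    intro j i
    rw [show (∑ x : ZMod 2, g j i x) = g j i 0 + g j i 1 from Fin.sum_univ_two _]
    simp only [hg]
    norm_num
  simp [hx]
end

section
/- Let K, K', r be positive integers with r ≤ K and r ≤ K', let G ∈ F₂^{r×r} be invertible, and fix injections ρ : {1,…,r} ↪ {1,…,K'} and σ : {1,…,r} ↪ {1,…,K}. Then the number of matrices H ∈ F₂^{K'×K} such that rank(H) = r and the submatrix of H with rows ρ(1),…,ρ(r) and columns σ(1),…,σ(r) equals G is exactly 2^{r(K−r)} · 2^{r(K'−r)}. -/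
open Matrix

set_option linter.unusedSectionVars false
set_option maxHeartbeats 800000

section aux
variable {R : Type*} [Field R] {m n m' n' : Type*}
  [Fintype m] [Fintype n] [Fintype m'] [Fintype n']
  [DecidableEq m] [DecidableEq n] [DecidableEq m'] [DecidableEq n']

lemma CR_one_submatrix_mul (A : Matrix m n R) (f : m' → m) :
    (1 : Matrix m m R).submatrix f id * A = A.submatrix f id := by
  ext i j
  simp [Matrix.mul_apply, Matrix.one_apply]

lemma CR_mul_one_submatrix (A : Matrix m n R) (g : n' → n) :
    A * (1 : Matrix n n R).submatrix id g = A.submatrix id g := by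
  ext i j
  simp [Matrix.mul_apply, Matrix.one_apply]

lemma CR_rank_submatrix_le (A : Matrix m n R) (f : m' → m) (g : n' → n) :
    (A.submatrix f g).rank ≤ A.rank := by
  have h : A.submatrix f g
      = (1 : Matrix m m R).submatrix f id * (A * (1 : Matrix n n R).submatrix id g) := by
    rw [CR_mul_one_submatrix, CR_one_submatrix_mul, Matrix.submatrix_submatrix]
    rfl
  rw [h]
  exact le_trans (rank_mul_le_right _ _) (rank_mul_le_left _ _)

lemma CR_rank_submatrix (A : Matrix m n R) (e₁ : m' ≃ m) (e₂ : n' ≃ n) :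
    (A.submatrix e₁ e₂).rank = A.rank := by
  refine le_antisymm (CR_rank_submatrix_le A e₁ e₂) ?_
  have := CR_rank_submatrix_le (A.submatrix e₁ e₂) e₁.symm e₂.symm
  rwa [Matrix.submatrix_submatrix, Equiv.self_comp_symm, Equiv.self_comp_symm,
    Matrix.submatrix_id_id] at this

end aux

section blk
variable {R : Type*} [Field R] {α β γ : Type*}
  [Fintype α] [Fintype β] [Fintype γ]
  [DecidableEq α] [DecidableEq β] [DecidableEq γ]

lemma CR_rank_blockDiag_zero (G : Matrix α α R) (hG : IsUnit G) :
    (Matrix.fromBlocks G 0 0 (0 : Matrix β γ R)).rank = Fintype.card α := by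
  refine le_antisymm ?_ ?_
  · have hfac : Matrix.fromBlocks G 0 0 (0 : Matrix β γ R)
        = Matrix.fromRows G (0 : Matrix β α R) * Matrix.fromCols 1 (0 : Matrix α γ R) := by
      rw [Matrix.fromRows_mul_fromCols]; simp
    rw [hfac]
    exact le_trans (rank_mul_le_left _ _) (Matrix.rank_le_card_width _)
  · have hsub : G = (Matrix.fromBlocks G 0 0 (0 : Matrix β γ R)).submatrix Sum.inl Sum.inl := by
      ext i j; simp
    calc Fintype.card α = G.rank := (Matrix.rank_of_isUnit G hG).symm
      _ ≤ _ := by rw [hsub]; exact CR_rank_submatrix_le _ _ _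

lemma CR_rank_block_param (G : Matrix α α R) (hG : IsUnit G)
    (A : Matrix α γ R) (B : Matrix β α R) :
    (Matrix.fromBlocks G (G * A) (B * G) (B * G * A)).rank = Fintype.card α := by
  have hdet : IsUnit G.det := (Matrix.isUnit_iff_isUnit_det G).mp hG
  have hfac : Matrix.fromBlocks G (G * A) (B * G) (B * G * A)
      = (Matrix.fromBlocks 1 0 B 1 : Matrix (α ⊕ β) (α ⊕ β) R) * (Matrix.fromBlocks G 0 0 (0 : Matrix β γ R) * (Matrix.fromBlocks 1 A 0 1 : Matrix (α ⊕ γ) (α ⊕ γ) R)) := by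
    simp [Matrix.fromBlocks_multiply, Matrix.mul_assoc]
  have hdL : IsUnit (Matrix.fromBlocks (1 : Matrix α α R) 0 B 1).det := by
    rw [Matrix.det_fromBlocks_zero₁₂]; simp
  have hdR : IsUnit (Matrix.fromBlocks (1 : Matrix α α R) A 0 1).det := by
    rw [Matrix.det_fromBlocks_zero₂₁]; simp
  rw [hfac, Matrix.rank_mul_eq_right_of_isUnit_det _ _ hdL,
    Matrix.rank_mul_eq_left_of_isUnit_det _ _ hdR]
  exact CR_rank_blockDiag_zero G hG

lemma CR_schur (G : Matrix α α R) (hG : IsUnit G) (H : Matrix (α ⊕ β) (α ⊕ γ) R)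
    (hrank : H.rank = Fintype.card α) (hblk : H.toBlocks₁₁ = G) :
    H.toBlocks₂₂ = H.toBlocks₂₁ * G⁻¹ * H.toBlocks₁₂ := by
  have hdet : IsUnit G.det := (Matrix.isUnit_iff_isUnit_det G).mp hG
  set H12 := H.toBlocks₁₂ with h12
  set H21 := H.toBlocks₂₁ with h21
  set H22 := H.toBlocks₂₂ with h22
  have hH : H = Matrix.fromBlocks G H12 H21 H22 := by
    rw [← hblk, h12, h21, h22, Matrix.fromBlocks_toBlocks]
  set S := H22 - H21 * G⁻¹ * H12 with hSdef
  have hLHR : (Matrix.fromBlocks 1 0 (-(H21 * G⁻¹)) 1 : Matrix (α ⊕ β) (α ⊕ β) R) * H * (Matrix.fromBlocks 1 (-(G⁻¹ * H12)) 0 1 : Matrix (α ⊕ γ) (α ⊕ γ) R)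
      = Matrix.fromBlocks G 0 0 S := by
    rw [hH]
    simp [Matrix.fromBlocks_multiply, Matrix.mul_assoc, Matrix.nonsing_inv_mul _ hdet,
      Matrix.mul_nonsing_inv _ hdet, Matrix.mul_nonsing_inv_cancel_left _ _ hdet, hSdef,
      sub_eq_add_neg, Matrix.mul_sub, Matrix.sub_mul]
    abel
  have hdL : IsUnit (Matrix.fromBlocks (1 : Matrix α α R) 0 (-(H21 * G⁻¹)) 1).det := by
    rw [Matrix.det_fromBlocks_zero₁₂]; simp
  have hdR : IsUnit (Matrix.fromBlocks (1 : Matrix α α R) (-(G⁻¹ * H12)) 0 1).det := by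
    rw [Matrix.det_fromBlocks_zero₂₁]; simp
  have hrS : (Matrix.fromBlocks G 0 0 S).rank = Fintype.card α := by
    rw [← hLHR, Matrix.rank_mul_eq_left_of_isUnit_det _ _ hdR,
      Matrix.rank_mul_eq_right_of_isUnit_det _ _ hdL, hrank]
  have hS : S = 0 := by
    ext i j
    by_contra hne
    have hsub : (Matrix.fromBlocks G 0 0 S).submatrix
        (Sum.elim Sum.inl (fun _ : Fin 1 => Sum.inr i))
        (Sum.elim Sum.inl (fun _ : Fin 1 => Sum.inr j))
        = Matrix.fromBlocks G 0 0 (Matrix.of fun (_ _ : Fin 1) => S i j) := by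
      ext a b; rcases a with a | a <;> rcases b with b | b <;> simp
    have hdet2 : IsUnit (Matrix.fromBlocks G 0 0 (Matrix.of fun (_ _ : Fin 1) => S i j)).det := by
      rw [Matrix.det_fromBlocks_zero₂₁]
      exact hdet.mul (by simpa [Matrix.det_fin_one] using isUnit_iff_ne_zero.mpr hne)
    have hge : Fintype.card α + 1 ≤ (Matrix.fromBlocks G 0 0 S).rank := by
      calc Fintype.card α + 1 = Fintype.card (α ⊕ Fin 1) := by simp
        _ = (Matrix.fromBlocks G 0 0 (Matrix.of fun (_ _ : Fin 1) => S i j)).rank :=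
          (Matrix.rank_of_isUnit _ ((Matrix.isUnit_iff_isUnit_det _).mpr hdet2)).symm
        _ ≤ _ := by rw [← hsub]; exact CR_rank_submatrix_le _ _ _
    omega
  have := sub_eq_zero.mp (hSdef ▸ hS)
  exact this
end blk

lemma CR_card_mat (a b : ℕ) : Fintype.card (Matrix (Fin a) (Fin b) (ZMod 2)) = 2 ^ (a * b) := by
  have h : Fintype.card (Matrix (Fin a) (Fin b) (ZMod 2))
      = Fintype.card (Fin a → Fin b → ZMod 2) := Fintype.card_congr (Equiv.refl _)
  rw [h]
  simp only [Fintype.card_fun, Fintype.card_fin, ZMod.card]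
  rw [← pow_mul, Nat.mul_comm]

lemma CR_block_count (r m m' : ℕ) (G : Matrix (Fin r) (Fin r) (ZMod 2)) (hG : IsUnit G) :
    {H : Matrix (Fin r ⊕ Fin m') (Fin r ⊕ Fin m) (ZMod 2) |
      H.rank = r ∧ H.toBlocks₁₁ = G}.ncard = 2 ^ (r * m) * 2 ^ (r * m') := by
  have hdet : IsUnit G.det := (Matrix.isUnit_iff_isUnit_det G).mp hG
  set f : Matrix (Fin r) (Fin m) (ZMod 2) × Matrix (Fin m') (Fin r) (ZMod 2) →
      Matrix (Fin r ⊕ Fin m') (Fin r ⊕ Fin m) (ZMod 2) :=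
    fun p => Matrix.fromBlocks G (G * p.1) (p.2 * G) (p.2 * G * p.1) with hf
  have hinj : Function.Injective f := by
    intro p q h
    have h12 : G * p.1 = G * q.1 := by
      have := congrArg Matrix.toBlocks₁₂ h
      simpa [hf] using this
    have h21 : p.2 * G = q.2 * G := by
      have := congrArg Matrix.toBlocks₂₁ h
      simpa [hf] using this
    have e1 : p.1 = q.1 := by
      have := congrArg (fun M => G⁻¹ * M) h12
      simpa [Matrix.nonsing_inv_mul_cancel_left _ _ hdet] using this
    have e2 : p.2 = q.2 := by
      have := congrArg (fun M => M * G⁻¹) h21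
      simpa [Matrix.mul_nonsing_inv_cancel_right _ _ hdet] using this
    exact Prod.ext e1 e2
  have hset : {H : Matrix (Fin r ⊕ Fin m') (Fin r ⊕ Fin m) (ZMod 2) |
      H.rank = r ∧ H.toBlocks₁₁ = G} = Set.range f := by
    ext H
    constructor
    · rintro ⟨hrank, hblk⟩
      have h22 := CR_schur G hG H (by simpa using hrank) hblk
      refine ⟨(G⁻¹ * H.toBlocks₁₂, H.toBlocks₂₁ * G⁻¹), ?_⟩
      have hb12 : G * (G⁻¹ * H.toBlocks₁₂) = H.toBlocks₁₂ :=
        Matrix.mul_nonsing_inv_cancel_left _ _ hdet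
      have hb21 : H.toBlocks₂₁ * G⁻¹ * G = H.toBlocks₂₁ :=
        Matrix.nonsing_inv_mul_cancel_right _ _ hdet
      have hb22 : H.toBlocks₂₁ * G⁻¹ * G * (G⁻¹ * H.toBlocks₁₂) = H.toBlocks₂₂ := by
        rw [hb21, ← Matrix.mul_assoc, h22]
      show Matrix.fromBlocks G (G * (G⁻¹ * H.toBlocks₁₂)) (H.toBlocks₂₁ * G⁻¹ * G)
          (H.toBlocks₂₁ * G⁻¹ * G * (G⁻¹ * H.toBlocks₁₂)) = H
      rw [hb22, hb12, hb21, ← hblk, Matrix.fromBlocks_toBlocks]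
    · rintro ⟨p, rfl⟩
      refine ⟨?_, by simp [hf]⟩
      simpa using CR_rank_block_param G hG p.1 p.2
  rw [hset, ← Nat.card_coe_set_eq, Nat.card_range_of_injective hinj,
    Nat.card_eq_fintype_card, Fintype.card_prod, CR_card_mat, CR_card_mat, Nat.mul_comm m' r]



/-- Counting the rank-`r` extensions of a prescribed invertible `r × r` submatrix `G`:
there are exactly `2^(r(K-r)) * 2^(r(K'-r))` matrices `H ∈ F₂^(K'×K)` of rank `r`
whose submatrix on the rows `ρ` and columns `σ` equals `G` (Appendix II of the paper). -/
theorem card_rank_eq_submatrix_eq (K K' r : ℕ) (hK : 0 < K) (hK' : 0 < K')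
    (hr : 0 < r) (hrK : r ≤ K) (hrK' : r ≤ K')
    (G : Matrix (Fin r) (Fin r) (ZMod 2)) (hG : IsUnit G)
    (ρ : Fin r ↪ Fin K') (σ : Fin r ↪ Fin K) :
    {H : Matrix (Fin K') (Fin K) (ZMod 2) |
        H.rank = r ∧ H.submatrix ρ σ = G}.ncard
      = 2 ^ (r * (K - r)) * 2 ^ (r * (K' - r)) := by
  classical
  have hc' : Fintype.card (↥(Set.range ⇑ρ)ᶜ) = K' - r := by
    rw [Fintype.card_compl_set, Set.card_range_of_injective ρ.injective]
    simp
  have hc : Fintype.card (↥(Set.range ⇑σ)ᶜ) = K - r := by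
    rw [Fintype.card_compl_set, Set.card_range_of_injective σ.injective]
    simp
  let e' : Fin r ⊕ Fin (K' - r) ≃ Fin K' :=
    (Equiv.sumCongr (Equiv.ofInjective ρ ρ.injective) (Fintype.equivFinOfCardEq hc').symm).trans
      (Equiv.Set.sumCompl (Set.range ⇑ρ))
  let e : Fin r ⊕ Fin (K - r) ≃ Fin K :=
    (Equiv.sumCongr (Equiv.ofInjective σ σ.injective) (Fintype.equivFinOfCardEq hc).symm).trans
      (Equiv.Set.sumCompl (Set.range ⇑σ))
  have he' : ∀ i, e' (Sum.inl i) = ρ i := fun i => by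
    simp [e', Equiv.Set.sumCompl_apply_inl]
  have he : ∀ i, e (Sum.inl i) = σ i := fun i => by
    simp [e, Equiv.Set.sumCompl_apply_inl]
  let Φ := Matrix.reindex (α := ZMod 2) e'.symm e.symm
  have hΦ : ∀ H, Φ H = H.submatrix e' e := fun H => by
    simp [Φ, Matrix.reindex_apply]
  have hiff : ∀ H : Matrix (Fin K') (Fin K) (ZMod 2),
      (H.rank = r ∧ H.submatrix ρ σ = G) ↔ ((Φ H).rank = r ∧ (Φ H).toBlocks₁₁ = G) := by
    intro H
    have h1 : (Φ H).rank = H.rank := by rw [hΦ]; exact CR_rank_submatrix H e' e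
    have h2 : (Φ H).toBlocks₁₁ = H.submatrix ρ σ := by
      ext i j
      rw [hΦ]
      simp [Matrix.toBlocks₁₁, he', he]
    rw [h1, h2]
  have himg : Φ '' {H : Matrix (Fin K') (Fin K) (ZMod 2) | H.rank = r ∧ H.submatrix ρ σ = G}
      = {H' : Matrix (Fin r ⊕ Fin (K' - r)) (Fin r ⊕ Fin (K - r)) (ZMod 2) |
          H'.rank = r ∧ H'.toBlocks₁₁ = G} := by
    ext H'
    constructor
    · rintro ⟨H, hH, rfl⟩
      exact (hiff H).1 hH
    · intro hH'
      exact ⟨Φ.symm H', (hiff _).2 (by simpa using hH'), by simp⟩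
  have hcard := Set.ncard_image_of_injective
    {H : Matrix (Fin K') (Fin K) (ZMod 2) | H.rank = r ∧ H.submatrix ρ σ = G} Φ.injective
  rw [← hcard, himg, CR_block_count r (K - r) (K' - r) G hG]
end

section
/- Let K, K', r be positive integers with r ≤ K and r ≤ K', and for a matrix H ∈ F₂^{K'×K} of rank r let V(H) denote the set of pairs (T, S) with T ⊆ {1,…,K'}, S ⊆ {1,…,K}, |T| = |S| = r, such that the r×r submatrix of H with rows T and columns S (taken in increasing order) has rank r. Fix an invertible matrix G ∈ F₂^{r×r}. Then for any two pairs (T₁, S₁) and (T₂, S₂) of subsets with |T₁| = |S₁| = |T₂| = |S₂| = r, the sums ∑ 1/|V(H)| over all H ∈ F₂^{K'×K} with rank(H) = r whose submatrix with rows T₁, columns S₁ equals G, and over all H with rank(H) = r whose submatrix with rows T₂, columns S₂ equals G, are equal. -/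
lemma rank_submatrix_equiv {l m n o : Type*} [Fintype m] [Fintype n] [Fintype l] [Fintype o]
    {R : Type*} [CommRing R] (A : Matrix m n R) (e₁ : l ≃ m) (e₂ : o ≃ n) :
    (A.submatrix ⇑e₁ ⇑e₂).rank = A.rank := by
  rw [Matrix.rank, Matrix.rank, Matrix.mulVecLin_submatrix,
    show LinearMap.funLeft R R (⇑e₂.symm) = ↑(LinearEquiv.funCongrLeft R R e₂.symm) from rfl,
    show LinearMap.funLeft R R ⇑e₁ = ↑(LinearEquiv.funCongrLeft R R e₁) from rfl,
    LinearMap.range_comp, LinearMap.range_comp, LinearEquiv.range, Submodule.map_top,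
    LinearEquiv.finrank_map_eq]

lemma exists_perm_orderEmb {n r : ℕ} (T₁ T₂ : Finset (Fin n))
    (h₁ : T₁.card = r) (h₂ : T₂.card = r) :
    ∃ σ : Equiv.Perm (Fin n), ∀ i, σ (T₂.orderEmbOfFin h₂ i) = T₁.orderEmbOfFin h₁ i := by
  classical
  let e : {x // x ∈ T₂} ≃ {x // x ∈ T₁} :=
    (T₂.orderIsoOfFin h₂).toEquiv.symm.trans (T₁.orderIsoOfFin h₁).toEquiv
  have hcard : Fintype.card {x : Fin n // ¬ x ∈ T₂} = Fintype.card {x : Fin n // ¬ x ∈ T₁} := by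
    simp [Fintype.card_subtype_compl, Fintype.card_coe, h₁, h₂]
  let e' : {x : Fin n // ¬ x ∈ T₂} ≃ {x : Fin n // ¬ x ∈ T₁} := Fintype.equivOfCardEq hcard
  refine ⟨(Equiv.sumCompl (· ∈ T₂)).symm.trans ((e.sumCongr e').trans (Equiv.sumCompl (· ∈ T₁))), ?_⟩
  intro i
  have hm : T₂.orderEmbOfFin h₂ i ∈ T₂ := Finset.orderEmbOfFin_mem _ _ _
  have hiso : (T₂.orderIsoOfFin h₂) i = ⟨T₂.orderEmbOfFin h₂ i, hm⟩ :=
    Subtype.ext (Finset.coe_orderIsoOfFin_apply _ _ _)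
  have he : (e ⟨T₂.orderEmbOfFin h₂ i, hm⟩ : Fin n) = T₁.orderEmbOfFin h₁ i := by
    rw [← hiso]
    simp [e, Finset.coe_orderIsoOfFin_apply]
  simp only [Equiv.trans_apply]
  rw [Equiv.sumCompl_symm_apply_of_pos hm]
  simpa using he

lemma orderEmb_factor {n r : ℕ} (σ : Equiv.Perm (Fin n)) (T : Finset (Fin n))
    (hT : T.card = r) (h' : (T.image σ).card = r) :
    ∃ π : Equiv.Perm (Fin r),
      ∀ i, (T.image ⇑σ).orderEmbOfFin h' (π i) = σ (T.orderEmbOfFin hT i) := by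
  classical
  have hmem : ∀ i : Fin r, σ (T.orderEmbOfFin hT i) ∈ T.image σ :=
    fun i => Finset.mem_image_of_mem _ (Finset.orderEmbOfFin_mem _ _ _)
  let f : Fin r → Fin r := fun i =>
    ((T.image ⇑σ).orderIsoOfFin h').symm ⟨σ (T.orderEmbOfFin hT i), hmem i⟩
  have hf : ∀ i, (T.image ⇑σ).orderEmbOfFin h' (f i) = σ (T.orderEmbOfFin hT i) := by
    intro i
    have := Finset.coe_orderIsoOfFin_apply (T.image ⇑σ) h' (f i)
    rw [← this]
    simp [f]
  have finj : Function.Injective f := by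
    intro i j hij
    have : σ (T.orderEmbOfFin hT i) = σ (T.orderEmbOfFin hT j) := by
      rw [← hf i, ← hf j, hij]
    exact (T.orderEmbOfFin hT).injective (σ.injective this)
  exact ⟨Equiv.ofBijective f (Finite.injective_iff_bijective.mp finj), hf⟩

/-- The set `V(H)` of the paper: pairs of a row-index set `T` and a column-index set
`S`, each of size `r`, such that the `r × r` submatrix of `H` on rows `T` and
columns `S` (taken in increasing order) has rank `r`. -/
def fullRankPairs (K K' r : ℕ) (H : Matrix (Fin K') (Fin K) (ZMod 2)) :
    Set (Finset (Fin K') × Finset (Fin K)) :=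
  {TS | ∃ (hT : TS.1.card = r) (hS : TS.2.card = r),
    (H.submatrix (TS.1.orderEmbOfFin hT) (TS.2.orderEmbOfFin hS)).rank = r}

lemma mem_fullRankPairs_submatrix {K K' r : ℕ} (H : Matrix (Fin K') (Fin K) (ZMod 2))
    (σ : Equiv.Perm (Fin K')) (τ : Equiv.Perm (Fin K))
    (TS : Finset (Fin K') × Finset (Fin K)) :
    TS ∈ fullRankPairs K K' r (H.submatrix σ τ) ↔
      (TS.1.image σ, TS.2.image τ) ∈ fullRankPairs K K' r H := by
  classical
  obtain ⟨T, S⟩ := TS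
  have hcT : (T.image ⇑σ).card = T.card := Finset.card_image_of_injective _ σ.injective
  have hcS : (S.image ⇑τ).card = S.card := Finset.card_image_of_injective _ τ.injective
  constructor
  · rintro ⟨hT, hS, hrank⟩
    have h' : (T.image ⇑σ).card = r := hcT.trans hT
    have h'' : (S.image ⇑τ).card = r := hcS.trans hS
    obtain ⟨π, hπ⟩ := orderEmb_factor σ T hT h'
    obtain ⟨ρ, hρ⟩ := orderEmb_factor τ S hS h''
    refine ⟨h', h'', ?_⟩
    have hmat : (H.submatrix σ τ).submatrix (T.orderEmbOfFin hT) (S.orderEmbOfFin hS)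
        = (H.submatrix ((T.image ⇑σ).orderEmbOfFin h') ((S.image ⇑τ).orderEmbOfFin h'')).submatrix π ρ := by
      ext i j
      simp [Matrix.submatrix_apply, hπ i, hρ j]
    rw [hmat] at hrank
    rwa [rank_submatrix_equiv] at hrank
  · rintro ⟨h', h'', hrank⟩
    have hT : T.card = r := hcT.symm.trans h'
    have hS : S.card = r := hcS.symm.trans h''
    obtain ⟨π, hπ⟩ := orderEmb_factor σ T hT h'
    obtain ⟨ρ, hρ⟩ := orderEmb_factor τ S hS h''
    refine ⟨hT, hS, ?_⟩
    have hmat : (H.submatrix σ τ).submatrix (T.orderEmbOfFin hT) (S.orderEmbOfFin hS)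
        = (H.submatrix ((T.image ⇑σ).orderEmbOfFin h') ((S.image ⇑τ).orderEmbOfFin h'')).submatrix π ρ := by
      ext i j
      simp [Matrix.submatrix_apply, hπ i, hρ j]
    rw [hmat, rank_submatrix_equiv]
    exact hrank

lemma ncard_fullRankPairs_submatrix {K K' r : ℕ} (H : Matrix (Fin K') (Fin K) (ZMod 2))
    (σ : Equiv.Perm (Fin K')) (τ : Equiv.Perm (Fin K)) :
    (fullRankPairs K K' r (H.submatrix σ τ)).ncard = (fullRankPairs K K' r H).ncard := by
  classical
  have key : fullRankPairs K K' r H =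
      (fun TS : Finset (Fin K') × Finset (Fin K) => (TS.1.image σ, TS.2.image τ)) ''
        fullRankPairs K K' r (H.submatrix σ τ) := by
    ext x
    constructor
    · intro hx
      refine ⟨(x.1.image ⇑σ.symm, x.2.image ⇑τ.symm), ?_, ?_⟩
      · rw [mem_fullRankPairs_submatrix]
        have h1 : (x.1.image ⇑σ.symm).image ⇑σ = x.1 := by
          rw [Finset.image_image]; simp
        have h2 : (x.2.image ⇑τ.symm).image ⇑τ = x.2 := by
          rw [Finset.image_image]; simp
        simpa [h1, h2] using hx
      · simp [Finset.image_image]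
    · rintro ⟨y, hy, rfl⟩
      exact (mem_fullRankPairs_submatrix H σ τ y).mp hy
  rw [key, Set.ncard_image_of_injective]
  intro a b hab
  have h1 := congrArg Prod.fst hab
  have h2 := congrArg Prod.snd hab
  simp only at h1 h2
  exact Prod.ext (Finset.image_injective σ.injective h1) (Finset.image_injective τ.injective h2)

open Finset Classical in
/-- First property in the proof of Lemma 5 (Appendix II): the weighted count
`∑_H 1/|V(H)|` of rank-`r` extensions of an invertible `G` does not depend on the
location `(T, S)` of the prescribed submatrix. -/
theorem sum_inv_ncard_fullRankPairs_loc_indep (K K' r : ℕ)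
    (hK : 0 < K) (hK' : 0 < K') (hr : 0 < r) (hrK : r ≤ K) (hrK' : r ≤ K')
    (G : Matrix (Fin r) (Fin r) (ZMod 2)) (hG : IsUnit G)
    (T₁ T₂ : Finset (Fin K')) (S₁ S₂ : Finset (Fin K))
    (hT₁ : T₁.card = r) (hS₁ : S₁.card = r) (hT₂ : T₂.card = r) (hS₂ : S₂.card = r) :
    ∑ H ∈ univ.filter (fun H : Matrix (Fin K') (Fin K) (ZMod 2) =>
        H.rank = r ∧ H.submatrix (T₁.orderEmbOfFin hT₁) (S₁.orderEmbOfFin hS₁) = G),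
      (1 : ℝ) / (fullRankPairs K K' r H).ncard
    = ∑ H ∈ univ.filter (fun H : Matrix (Fin K') (Fin K) (ZMod 2) =>
        H.rank = r ∧ H.submatrix (T₂.orderEmbOfFin hT₂) (S₂.orderEmbOfFin hS₂) = G),
      (1 : ℝ) / (fullRankPairs K K' r H).ncard := by
  classical
  obtain ⟨σ, hσ⟩ := exists_perm_orderEmb T₁ T₂ hT₁ hT₂
  obtain ⟨τ, hτ⟩ := exists_perm_orderEmb S₁ S₂ hS₁ hS₂
  refine Finset.sum_nbij' (fun H => H.submatrix σ τ) (fun H => H.submatrix ⇑σ.symm ⇑τ.symm)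
    ?_ ?_ ?_ ?_ ?_
  · intro H hH
    rw [Finset.mem_filter] at hH ⊢
    obtain ⟨-, hrank, hsub⟩ := hH
    refine ⟨Finset.mem_univ _, ?_, ?_⟩
    · show (H.submatrix ⇑σ ⇑τ).rank = r
      rw [rank_submatrix_equiv]; exact hrank
    · ext i j
      simp only [Matrix.submatrix_apply, hσ i, hτ j]
      exact congrFun (congrFun hsub i) j
  · intro H hH
    rw [Finset.mem_filter] at hH ⊢
    obtain ⟨-, hrank, hsub⟩ := hH
    refine ⟨Finset.mem_univ _, ?_, ?_⟩
    · show (H.submatrix ⇑σ.symm ⇑τ.symm).rank = r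
      rw [rank_submatrix_equiv]; exact hrank
    · ext i j
      have h1 : σ.symm (T₁.orderEmbOfFin hT₁ i) = T₂.orderEmbOfFin hT₂ i := by
        rw [← hσ i, Equiv.symm_apply_apply]
      have h2 : τ.symm (S₁.orderEmbOfFin hS₁ j) = S₂.orderEmbOfFin hS₂ j := by
        rw [← hτ j, Equiv.symm_apply_apply]
      simp only [Matrix.submatrix_apply, h1, h2]
      exact congrFun (congrFun hsub i) j
  · intro H _
    ext i j
    simp [Matrix.submatrix_apply]
  · intro H _
    ext i j
    simp [Matrix.submatrix_apply]
  · intro H _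
    rw [ncard_fullRankPairs_submatrix]
end

section
/- Let K, K', r be positive integers with r ≤ K and r ≤ K', and for a matrix H ∈ F₂^{K'×K} of rank r let V(H) denote the set of pairs (T, S) with T ⊆ {1,…,K'}, S ⊆ {1,…,K}, |T| = |S| = r, such that the r×r submatrix of H with rows T and columns S (taken in increasing order) has rank r. Fix subsets T ⊆ {1,…,K'} and S ⊆ {1,…,K} with |T| = |S| = r. Then for any two invertible matrices G₁, G₂ ∈ F₂^{r×r}, the sums ∑ 1/|V(H)| over all H ∈ F₂^{K'×K} with rank(H) = r whose submatrix with rows T and columns S equals G₁, respectively equals G₂, are equal. -/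
open Matrix

namespace FRPaux

abbrev F := ZMod 2

/-- selection matrices: identity submatrix multiplications -/
lemma one_submatrix_mul' {a b c : ℕ} (f : Fin a → Fin b) (M : Matrix (Fin b) (Fin c) F) :
    (1 : Matrix (Fin b) (Fin b) F).submatrix f id * M = M.submatrix f id := by
  ext i j
  simp [Matrix.mul_apply, Matrix.one_apply]

lemma mul_one_submatrix' {a b c : ℕ} (g : Fin c → Fin b) (M : Matrix (Fin a) (Fin b) F) :
    M * (1 : Matrix (Fin b) (Fin b) F).submatrix id g = M.submatrix id g := by
  ext i j
  simp [Matrix.mul_apply, Matrix.one_apply]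

lemma rank_submatrix_le' {a b c d : ℕ} (A : Matrix (Fin a) (Fin b) F)
    (f : Fin c → Fin a) (g : Fin d → Fin b) :
    (A.submatrix f g).rank ≤ A.rank := by
  have h1 : A.submatrix f g = (1 : Matrix (Fin a) (Fin a) F).submatrix f id * A *
      (1 : Matrix (Fin b) (Fin b) F).submatrix id g := by
    rw [one_submatrix_mul', mul_one_submatrix', Matrix.submatrix_submatrix]
    rfl
  rw [h1]
  exact (Matrix.rank_mul_le_left _ _).trans (Matrix.rank_mul_le_right _ _)

lemma isUnit_of_rank_eq {r : ℕ} (A : Matrix (Fin r) (Fin r) F) (h : A.rank = r) :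
    IsUnit A := by
  rw [← Matrix.mulVec_surjective_iff_isUnit]
  have htop : LinearMap.range A.mulVecLin = ⊤ := by
    apply Submodule.eq_top_of_finrank_eq
    rw [show Module.finrank F (LinearMap.range A.mulVecLin) = A.rank from rfl, h]
    simp [Module.finrank_fintype_fun_eq_card]
  intro v
  obtain ⟨w, hw⟩ := LinearMap.range_eq_top.mp htop v
  exact ⟨w, hw⟩

lemma rank_sandwich {r : ℕ} (A M B : Matrix (Fin r) (Fin r) F) (hM : IsUnit M) :
    (A * M * B).rank = r ↔ IsUnit A ∧ IsUnit B := by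
  constructor
  · intro h
    have hA : (A * M * B).rank ≤ A.rank :=
      (Matrix.rank_mul_le_left _ _).trans (Matrix.rank_mul_le_left _ _)
    have hB : (A * M * B).rank ≤ B.rank := Matrix.rank_mul_le_right _ _
    have hAr : A.rank = r := le_antisymm (by simpa using A.rank_le_card_width) (le_of_eq_of_le h.symm hA)
    have hBr : B.rank = r := le_antisymm (by simpa using B.rank_le_card_width) (le_of_eq_of_le h.symm hB)
    exact ⟨isUnit_of_rank_eq A hAr, isUnit_of_rank_eq B hBr⟩
  · rintro ⟨hA, hB⟩
    have : IsUnit (A * M * B) := (hA.mul hM).mul hB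
    simpa using Matrix.rank_of_isUnit _ this

lemma submatrix_triple {a b r c d : ℕ} (L : Matrix (Fin a) (Fin r) F)
    (G : Matrix (Fin r) (Fin r) F) (Rw : Matrix (Fin r) (Fin b) F)
    (f : Fin c → Fin a) (g : Fin d → Fin b) :
    (L * G * Rw).submatrix f g = L.submatrix f id * G * Rw.submatrix id g := by
  rw [Matrix.submatrix_mul (L * G) Rw f id g Function.bijective_id,
    Matrix.submatrix_mul L G f id id Function.bijective_id, Matrix.submatrix_id_id]

lemma rank_triple_iff {K K' r : ℕ} (L : Matrix (Fin K') (Fin r) F)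
    (G : Matrix (Fin r) (Fin r) F) (Rw : Matrix (Fin r) (Fin K) F) (hG : IsUnit G)
    (f' : Fin r → Fin K') (g' : Fin r → Fin K) :
    ((L * G * Rw).submatrix f' g').rank = r ↔
      IsUnit (L.submatrix f' id) ∧ IsUnit (Rw.submatrix id g') := by
  rw [submatrix_triple]
  exact rank_sandwich _ _ _ hG

lemma fullRankPairs_triple_congr {K K' r : ℕ} (L : Matrix (Fin K') (Fin r) F)
    (Ga Gb : Matrix (Fin r) (Fin r) F) (Rw : Matrix (Fin r) (Fin K) F)
    (hGa : IsUnit Ga) (hGb : IsUnit Gb) :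
    fullRankPairs K K' r (L * Ga * Rw) = fullRankPairs K K' r (L * Gb * Rw) := by
  ext TS
  constructor <;> rintro ⟨h1, h2, h3⟩
  · exact ⟨h1, h2, (rank_triple_iff L Gb Rw hGb _ _).mpr ((rank_triple_iff L Ga Rw hGa _ _).mp h3)⟩
  · exact ⟨h1, h2, (rank_triple_iff L Ga Rw hGa _ _).mpr ((rank_triple_iff L Gb Rw hGb _ _).mp h3)⟩

/-- CUR factorization: if `H` has rank `r` and the submatrix on `(f, g)` is invertible,
then `H = H[:,g] * G⁻¹ * H[f,:]`. -/
lemma factor {K K' r : ℕ} (H : Matrix (Fin K') (Fin K) F)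
    (f : Fin r → Fin K') (g : Fin r → Fin K) (hH : H.rank = r)
    (hG : IsUnit (H.submatrix f g)) :
    H = H.submatrix id g * (H.submatrix f g)⁻¹ * H.submatrix f id := by
  set G := H.submatrix f g with hGdef
  set C := H.submatrix id g with hCdef
  have hdet : IsUnit G.det := (Matrix.isUnit_iff_isUnit_det G).mp hG
  have hCf : C.submatrix f id = G := by
    rw [hCdef, Matrix.submatrix_submatrix]; rfl
  have hrankG : G.rank = r := by simpa using Matrix.rank_of_isUnit G hG
  have hrankC : C.rank = r := by
    refine le_antisymm (by simpa using C.rank_le_card_width) ?_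
    calc r = G.rank := hrankG.symm
    _ = (C.submatrix f id).rank := by rw [hCf]
    _ ≤ C.rank := rank_submatrix_le' C f id
  -- column space of C equals column space of H
  have hCH : C = H * (1 : Matrix (Fin K) (Fin K) F).submatrix id g :=
    (mul_one_submatrix' g H).symm
  have hle : LinearMap.range C.mulVecLin ≤ LinearMap.range H.mulVecLin := by
    rw [hCH, Matrix.mulVecLin_mul]
    exact LinearMap.range_comp_le_range _ _
  have heq : LinearMap.range C.mulVecLin = LinearMap.range H.mulVecLin := by
    apply Submodule.eq_of_le_of_finrank_le hle
    show Matrix.rank H ≤ Matrix.rank C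
    rw [hH, hrankC]
  -- lift: H = C * N
  obtain ⟨Nlin, hN⟩ := Module.projective_lifting_property
    (C.mulVecLin.rangeRestrict)
    (H.mulVecLin.codRestrict (LinearMap.range C.mulVecLin)
      (fun x => heq ▸ LinearMap.mem_range_self _ x))
    (LinearMap.surjective_rangeRestrict _)
  have hcomp : C.mulVecLin ∘ₗ Nlin = H.mulVecLin :=
    LinearMap.ext fun x => congrArg Subtype.val (LinearMap.congr_fun hN x)
  set N := LinearMap.toMatrix' Nlin with hNdef
  have hHCN : H = C * N := by
    apply Matrix.toLin'.injective
    rw [Matrix.toLin'_mul, hNdef, Matrix.toLin'_toMatrix']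
    exact hcomp.symm
  have hfN : H.submatrix f id = G * N := by
    rw [hHCN, Matrix.submatrix_mul C N f id id Function.bijective_id,
      Matrix.submatrix_id_id, hCf]
  rw [hfN, Matrix.mul_assoc, Matrix.nonsing_inv_mul_cancel_left _ _ hdet]
  exact hHCN

/-- Master lemma: the map `H ↦ H[:,g] * Ga⁻¹ * Gb * Ga⁻¹ * H[f,:]`. -/
lemma master {K K' r : ℕ} (f : Fin r → Fin K') (g : Fin r → Fin K)
    (Ga Gb : Matrix (Fin r) (Fin r) F) (hGa : IsUnit Ga) (hGb : IsUnit Gb)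
    (H : Matrix (Fin K') (Fin K) F) (hH : H.rank = r) (hsub : H.submatrix f g = Ga) :
    ((H.submatrix id g * (Ga⁻¹ * Gb * Ga⁻¹) * H.submatrix f id).rank = r) ∧
    ((H.submatrix id g * (Ga⁻¹ * Gb * Ga⁻¹) * H.submatrix f id).submatrix f g = Gb) ∧
    ((H.submatrix id g * (Ga⁻¹ * Gb * Ga⁻¹) * H.submatrix f id).submatrix id g *
      (Gb⁻¹ * Ga * Gb⁻¹) *
      (H.submatrix id g * (Ga⁻¹ * Gb * Ga⁻¹) * H.submatrix f id).submatrix f id = H) ∧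
    (fullRankPairs K K' r (H.submatrix id g * (Ga⁻¹ * Gb * Ga⁻¹) * H.submatrix f id)
      = fullRankPairs K K' r H) := by
  have hdeta : IsUnit Ga.det := (Matrix.isUnit_iff_isUnit_det Ga).mp hGa
  have hdetb : IsUnit Gb.det := (Matrix.isUnit_iff_isUnit_det Gb).mp hGb
  set L : Matrix (Fin K') (Fin r) F := H.submatrix id g * Ga⁻¹ with hLdef
  set Rw : Matrix (Fin r) (Fin K) F := Ga⁻¹ * H.submatrix f id with hRdef
  have hL : L.submatrix f id = 1 := by
    rw [hLdef, Matrix.submatrix_mul _ _ f id id Function.bijective_id,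
      Matrix.submatrix_id_id, Matrix.submatrix_submatrix]
    show H.submatrix f g * Ga⁻¹ = 1
    rw [hsub, Matrix.mul_nonsing_inv _ hdeta]
  have hR : Rw.submatrix id g = 1 := by
    rw [hRdef, Matrix.submatrix_mul _ _ id id g Function.bijective_id,
      Matrix.submatrix_id_id, Matrix.submatrix_submatrix]
    show Ga⁻¹ * H.submatrix f g = 1
    rw [hsub, Matrix.nonsing_inv_mul _ hdeta]
  have hHLR : H = L * Ga * Rw := by
    have := factor H f g hH (hsub ▸ hGa)
    rw [hsub] at this
    rw [hLdef, hRdef]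
    calc H = H.submatrix id g * Ga⁻¹ * H.submatrix f id := this
    _ = H.submatrix id g * Ga⁻¹ * Ga * (Ga⁻¹ * H.submatrix f id) := by
        simp only [Matrix.mul_assoc]
        rw [Matrix.nonsing_inv_mul_cancel_left _ _ hdeta]
  have hΦ : H.submatrix id g * (Ga⁻¹ * Gb * Ga⁻¹) * H.submatrix f id = L * Gb * Rw := by
    rw [hLdef, hRdef]
    simp only [Matrix.mul_assoc]
  refine ⟨?_, ?_, ?_, ?_⟩
  · -- rank
    rw [hΦ]
    refine le_antisymm ?_ ?_
    · calc (L * Gb * Rw).rank ≤ (L * Gb).rank := Matrix.rank_mul_le_left _ _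
      _ ≤ Gb.rank := Matrix.rank_mul_le_right _ _
      _ ≤ r := by simpa using Gb.rank_le_card_width
    · calc r = Gb.rank := by simpa using (Matrix.rank_of_isUnit Gb hGb).symm
      _ = ((L * Gb * Rw).submatrix f g).rank := by
          rw [submatrix_triple, hL, hR, Matrix.one_mul, Matrix.mul_one]
      _ ≤ (L * Gb * Rw).rank := rank_submatrix_le' _ f g
  · rw [hΦ, submatrix_triple, hL, hR, Matrix.one_mul, Matrix.mul_one]
  · -- inverse
    rw [hΦ]
    have h1 : (L * Gb * Rw).submatrix id g = L * Gb := by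
      rw [Matrix.submatrix_mul _ _ id id g Function.bijective_id, Matrix.submatrix_id_id,
        hR, Matrix.mul_one]
    have h2 : (L * Gb * Rw).submatrix f id = Gb * Rw := by
      rw [Matrix.submatrix_mul (L * Gb) Rw f id id Function.bijective_id,
        Matrix.submatrix_id_id,
        Matrix.submatrix_mul L Gb f id id Function.bijective_id, Matrix.submatrix_id_id,
        hL, Matrix.one_mul]
    rw [h1, h2, hHLR]
    simp only [Matrix.mul_assoc]
    rw [Matrix.mul_nonsing_inv_cancel_left _ _ hdetb,
      Matrix.nonsing_inv_mul_cancel_left _ _ hdetb]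
  · rw [hΦ]
    conv_rhs => rw [hHLR]
    exact fullRankPairs_triple_congr L Gb Ga Rw hGb hGa

end FRPaux

open Finset Classical in
/-- Second property in the proof of Lemma 5 (Appendix II): the weighted count
`∑_H 1/|V(H)|` of rank-`r` extensions of an invertible `r × r` matrix depends only
on its rank, not on the matrix itself. -/
theorem sum_inv_ncard_fullRankPairs_G_indep (K K' r : ℕ)
    (hK : 0 < K) (hK' : 0 < K') (hr : 0 < r) (hrK : r ≤ K) (hrK' : r ≤ K')
    (T : Finset (Fin K')) (S : Finset (Fin K))
    (hT : T.card = r) (hS : S.card = r)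
    (G₁ G₂ : Matrix (Fin r) (Fin r) (ZMod 2)) (hG₁ : IsUnit G₁) (hG₂ : IsUnit G₂) :
    ∑ H ∈ univ.filter (fun H : Matrix (Fin K') (Fin K) (ZMod 2) =>
        H.rank = r ∧ H.submatrix (T.orderEmbOfFin hT) (S.orderEmbOfFin hS) = G₁),
      (1 : ℝ) / (fullRankPairs K K' r H).ncard
    = ∑ H ∈ univ.filter (fun H : Matrix (Fin K') (Fin K) (ZMod 2) =>
        H.rank = r ∧ H.submatrix (T.orderEmbOfFin hT) (S.orderEmbOfFin hS) = G₂),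
      (1 : ℝ) / (fullRankPairs K K' r H).ncard := by
  set f : Fin r → Fin K' := ⇑(T.orderEmbOfFin hT) with hf
  set g : Fin r → Fin K := ⇑(S.orderEmbOfFin hS) with hg
  refine Finset.sum_nbij'
    (i := fun H => H.submatrix id g * (G₁⁻¹ * G₂ * G₁⁻¹) * H.submatrix f id)
    (j := fun H => H.submatrix id g * (G₂⁻¹ * G₁ * G₂⁻¹) * H.submatrix f id)
    ?_ ?_ ?_ ?_ ?_
  · intro H hH
    rw [Finset.mem_filter] at hH ⊢
    obtain ⟨-, h1, h2⟩ := hH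
    obtain ⟨p1, p2, -, -⟩ := FRPaux.master f g G₁ G₂ hG₁ hG₂ H h1 h2
    exact ⟨Finset.mem_univ _, p1, p2⟩
  · intro H hH
    rw [Finset.mem_filter] at hH ⊢
    obtain ⟨-, h1, h2⟩ := hH
    obtain ⟨p1, p2, -, -⟩ := FRPaux.master f g G₂ G₁ hG₂ hG₁ H h1 h2
    exact ⟨Finset.mem_univ _, p1, p2⟩
  · intro H hH
    rw [Finset.mem_filter] at hH
    obtain ⟨-, h1, h2⟩ := hH
    obtain ⟨-, -, p3, -⟩ := FRPaux.master f g G₁ G₂ hG₁ hG₂ H h1 h2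
    exact p3
  · intro H hH
    rw [Finset.mem_filter] at hH
    obtain ⟨-, h1, h2⟩ := hH
    obtain ⟨-, -, p3, -⟩ := FRPaux.master f g G₂ G₁ hG₂ hG₁ H h1 h2
    exact p3
  · intro H hH
    rw [Finset.mem_filter] at hH
    obtain ⟨-, h1, h2⟩ := hH
    obtain ⟨-, -, -, p4⟩ := FRPaux.master f g G₁ G₂ hG₁ hG₂ H h1 h2
    rw [p4]
end

section
/- Let K, K', r be positive integers with r ≤ K and r ≤ K', and for a matrix H ∈ F₂^{K'×K} of rank r let V(H) denote the set of pairs (T, S) with T ⊆ {1,…,K'}, S ⊆ {1,…,K}, |T| = |S| = r, such that the r×r submatrix of H with rows T and columns S (taken in increasing order) has rank r. Let N_{a,b}(i) denote the number of a×b matrices over F₂ of rank i. Then for every invertible matrix G ∈ F₂^{r×r}, ∑_{(T,S)} ∑_H 1/|V(H)| = N_{K',K}(r) / N_{r,r}(r), where the outer sum is over all pairs (T, S) with T ⊆ {1,…,K'}, S ⊆ {1,…,K}, |T| = |S| = r, and the inner sum is over all H ∈ F₂^{K'×K} with rank(H) = r whose submatrix with rows T and columns S equals G. -/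
namespace Lemma5Aux

open Matrix Finset Module Submodule

abbrev F2 := ZMod 2

variable {a b r : ℕ}

def rowSel (f : Fin r → Fin a) : Matrix (Fin r) (Fin a) F2 :=
  (1 : Matrix (Fin a) (Fin a) F2).submatrix f id

def colSel (g : Fin r → Fin b) : Matrix (Fin b) (Fin r) F2 :=
  (1 : Matrix (Fin b) (Fin b) F2).submatrix id g

lemma rowSel_mul (f : Fin r → Fin a) (H : Matrix (Fin a) (Fin b) F2) :
    rowSel f * H = H.submatrix f id := by
  have := Matrix.one_submatrix_mul (α := F2) f (Equiv.refl (Fin a)) H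
  simpa [rowSel] using this

lemma mul_colSel (g : Fin r → Fin b) (H : Matrix (Fin a) (Fin b) F2) :
    H * colSel g = H.submatrix id g := by
  have := Matrix.mul_submatrix_one (α := F2) (Equiv.refl (Fin b)) g H
  simpa [colSel] using this

lemma sub_eq (H : Matrix (Fin a) (Fin b) F2) (f : Fin r → Fin a) (g : Fin r → Fin b) :
    H.submatrix f g = rowSel f * H * colSel g := by
  rw [rowSel_mul, mul_colSel, Matrix.submatrix_submatrix]
  simp

lemma isUnit_of_rank_eq (G : Matrix (Fin r) (Fin r) F2) (h : G.rank = r) : IsUnit G := by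
  rw [Matrix.isUnit_iff_isUnit_det, isUnit_iff_ne_zero]
  intro hdet
  obtain ⟨v, hv, hGv⟩ := (Matrix.exists_mulVec_eq_zero_iff).2 hdet
  have h1 := LinearMap.finrank_range_add_finrank_ker G.mulVecLin
  rw [Module.finrank_pi] at h1
  have h2 : finrank F2 (LinearMap.range G.mulVecLin) = r := h
  have h3 : finrank F2 (LinearMap.ker G.mulVecLin) = 0 := by
    rw [Fintype.card_fin] at h1; omega
  have h4 : LinearMap.ker G.mulVecLin = ⊥ := Submodule.finrank_eq_zero.mp h3
  apply hv
  have : v ∈ LinearMap.ker G.mulVecLin := by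
    simp [LinearMap.mem_ker, Matrix.mulVecLin_apply, hGv]
  rw [h4] at this
  simpa using this

end Lemma5Aux

namespace Lemma5Aux
open Matrix Finset Module Submodule

variable {a b r : ℕ}

lemma rank_PHQ_le (P : Matrix (Fin r) (Fin a) F2) (H : Matrix (Fin a) (Fin b) F2)
    (Q : Matrix (Fin b) (Fin r) F2) : (P * H * Q).rank ≤ H.rank :=
  le_trans (Matrix.rank_mul_le_left _ _) (Matrix.rank_mul_le_right P H)

lemma recon {H : Matrix (Fin a) (Fin b) F2} {P : Matrix (Fin r) (Fin a) F2}
    {Q : Matrix (Fin b) (Fin r) F2} (hle : H.rank ≤ r)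
    (hG : IsUnit (P * H * Q)) :
    H = (H * Q) * ((P * H * Q)⁻¹ * (P * H)) := by
  set G := P * H * Q with hGdef
  have hdet : IsUnit G.det := (Matrix.isUnit_iff_isUnit_det _).1 hG
  have hrG : G.rank = r := by rw [Matrix.rank_of_isUnit _ hG, Fintype.card_fin]
  have hCge : r ≤ (H * Q).rank := by
    have h1 : (P * (H * Q)).rank ≤ (H * Q).rank := Matrix.rank_mul_le_right _ _
    rw [← Matrix.mul_assoc, ← hGdef, hrG] at h1
    exact h1
  have hsub : LinearMap.range (H * Q).mulVecLin ≤ LinearMap.range H.mulVecLin := by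
    rw [Matrix.mulVecLin_mul]; exact LinearMap.range_comp_le_range _ _
  have hrange : LinearMap.range (H * Q).mulVecLin = LinearMap.range H.mulVecLin := by
    apply Submodule.eq_of_le_of_finrank_le hsub
    exact le_trans hle hCge
  have key : ∀ v, ((H * Q) * (G⁻¹ * (P * H))) *ᵥ v = H *ᵥ v := by
    intro v
    have hmem : H *ᵥ v ∈ LinearMap.range (H * Q).mulVecLin := by
      rw [hrange]; exact ⟨v, rfl⟩
    obtain ⟨x, hx⟩ := hmem
    simp only [Matrix.mulVecLin_apply] at hx
    have hGx : G *ᵥ x = (P * H) *ᵥ v := by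
      have : (P * (H * Q)) *ᵥ x = P *ᵥ ((H * Q) *ᵥ x) := by rw [Matrix.mulVec_mulVec]
      rw [← Matrix.mul_assoc] at this
      rw [← hGdef] at this
      rw [this, hx, ← Matrix.mulVec_mulVec]
    have hxval : x = G⁻¹ *ᵥ ((P * H) *ᵥ v) := by
      rw [← hGx, Matrix.mulVec_mulVec, Matrix.nonsing_inv_mul _ hdet, Matrix.one_mulVec]
    rw [show (H * Q) * (G⁻¹ * (P * H)) = (H * Q) * G⁻¹ * (P * H) from (Matrix.mul_assoc _ _ _).symm,
      ← Matrix.mulVec_mulVec, ← Matrix.mulVec_mulVec, ← hxval, hx]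
  ext i j
  have h := congrFun (key (Pi.single j 1)) i
  rw [Matrix.mulVec_single_one, Matrix.mulVec_single_one] at h
  exact h.symm

end Lemma5Aux

namespace Lemma5Aux
open Matrix Finset Module Submodule

variable {a b r : ℕ}

lemma rank_sandwich_iff (C : Matrix (Fin a) (Fin r) F2) (R : Matrix (Fin r) (Fin b) F2)
    (M : Matrix (Fin r) (Fin r) F2) (hM : IsUnit M)
    (P : Matrix (Fin r) (Fin a) F2) (Q : Matrix (Fin b) (Fin r) F2) :
    (P * (C * M * R) * Q).rank = r ↔ (P * C).rank = r ∧ (R * Q).rank = r := by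
  constructor
  · intro h
    constructor
    · have h1 : (P * (C * M * R) * Q).rank ≤ (P * C).rank := by
        have : P * (C * M * R) * Q = (P * C) * (M * (R * Q)) := by
          simp only [Matrix.mul_assoc]
        rw [this]
        exact Matrix.rank_mul_le_left _ _
      have h2 : (P * C).rank ≤ r := by
        have := Matrix.rank_le_card_width (P * C)
        simpa using this
      omega
    · have h1 : (P * (C * M * R) * Q).rank ≤ (R * Q).rank := by
        have : P * (C * M * R) * Q = (P * C * M) * (R * Q) := by
          simp only [Matrix.mul_assoc]
        rw [this]
        exact Matrix.rank_mul_le_right _ _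
      have h2 : (R * Q).rank ≤ r := by
        have := Matrix.rank_le_card_height (R * Q)
        simpa using this
      omega
  · rintro ⟨h1, h2⟩
    have hu1 : IsUnit (P * C) := isUnit_of_rank_eq _ h1
    have : P * (C * M * R) * Q = ((P * C) * M) * (R * Q) := by
      simp only [Matrix.mul_assoc]
    rw [this, Matrix.rank_mul_eq_right_of_isUnit_det, h2]
    rw [Matrix.det_mul]
    exact IsUnit.mul ((Matrix.isUnit_iff_isUnit_det _).1 hu1) ((Matrix.isUnit_iff_isUnit_det _).1 hM)

end Lemma5Aux

namespace Lemma5Aux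
open Matrix Finset Module Submodule

variable {a b r : ℕ}

lemma exists_cols (A : Matrix (Fin a) (Fin b) F2) (h : A.rank = r) :
    ∃ g : Fin r → Fin b, Function.Injective g ∧ (A.submatrix id g).rank = r := by
  classical
  obtain ⟨s, hs_sub, hs_span, hs_ind⟩ := exists_linearIndependent F2 (Set.range Aᵀ)
  have hsfin : s.Finite := (Set.finite_range Aᵀ).subset hs_sub
  haveI := hsfin.fintype
  have hcard : Fintype.card s = r := by
    rw [← Set.toFinset_card, ← finrank_span_set_eq_card hs_ind, hs_span]
    exact (Matrix.rank_eq_finrank_span_cols A).symm.trans h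
  have e : Fin r ≃ s := (Fintype.equivFinOfCardEq hcard).symm
  have hg : ∀ i : Fin r, ∃ j, Aᵀ j = ((e i : Fin a → F2)) := fun i => hs_sub (e i).2
  choose g hgspec using hg
  have hginj : Function.Injective g := by
    intro i i' hii
    apply e.injective
    apply Subtype.ext
    rw [← hgspec i, ← hgspec i', hii]
  refine ⟨g, hginj, ?_⟩
  have hind : LinearIndependent F2 (Aᵀ.submatrix g id) := by
    have h1 : (Aᵀ.submatrix g id : Fin r → Fin a → F2) = fun i => ((e i : Fin a → F2)) := by
      funext i
      exact hgspec i
    rw [h1]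
    exact hs_ind.comp e e.injective
  have h2 : (Aᵀ.submatrix g id).rank = r := by
    rw [LinearIndependent.rank_matrix (M := Aᵀ.submatrix g id) hind, Fintype.card_fin]
  rw [← Matrix.rank_transpose, Matrix.transpose_submatrix]
  exact h2

lemma exists_fullrank_sub (H : Matrix (Fin a) (Fin b) F2) (h : H.rank = r) :
    ∃ (f : Fin r → Fin a) (g : Fin r → Fin b), Function.Injective f ∧ Function.Injective g ∧
      (H.submatrix f g).rank = r := by
  obtain ⟨g, hginj, hg⟩ := exists_cols H h
  have h2 : (H.submatrix id g)ᵀ.rank = r := by rw [Matrix.rank_transpose]; exact hg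
  obtain ⟨f, hfinj, hf⟩ := exists_cols (H.submatrix id g)ᵀ h2
  refine ⟨f, g, hfinj, hginj, ?_⟩
  have h3 : ((H.submatrix id g)ᵀ.submatrix id f)ᵀ = H.submatrix f g := by
    rw [Matrix.transpose_submatrix, Matrix.transpose_transpose]
    simp [Matrix.submatrix_submatrix]
  rw [← h3, Matrix.rank_transpose]
  exact hf

end Lemma5Aux

namespace Lemma5Aux
open Matrix Finset Module Submodule

variable {a b r : ℕ}

/-- a permutation matching two injections with equal range -/
noncomputable def matchPerm {f f' : Fin r → Fin a} (hf : Function.Injective f)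
    (hf' : Function.Injective f') (hr : Set.range f' = Set.range f) : Fin r ≃ Fin r :=
  (Equiv.ofInjective f' hf').trans ((Equiv.setCongr hr).trans (Equiv.ofInjective f hf).symm)

lemma matchPerm_spec {f f' : Fin r → Fin a} (hf : Function.Injective f)
    (hf' : Function.Injective f') (hr : Set.range f' = Set.range f) (i : Fin r) :
    f (matchPerm hf hf' hr i) = f' i := by
  simp [matchPerm, Equiv.apply_ofInjective_symm]

lemma rank_sub_congr (H : Matrix (Fin a) (Fin b) F2)
    {f f' : Fin r → Fin a} {g g' : Fin r → Fin b}
    (hf : Function.Injective f) (hf' : Function.Injective f')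
    (hg : Function.Injective g) (hg' : Function.Injective g')
    (hrf : Set.range f' = Set.range f) (hrg : Set.range g' = Set.range g) :
    (H.submatrix f' g').rank = (H.submatrix f g).rank := by
  have hfeq : f ∘ (matchPerm hf hf' hrf) = f' := funext (matchPerm_spec hf hf' hrf)
  have hgeq : g ∘ (matchPerm hg hg' hrg) = g' := funext (matchPerm_spec hg hg' hrg)
  have h1 : H.submatrix f' g' = (H.submatrix f g).submatrix
      (matchPerm hf hf' hrf) (matchPerm hg hg' hrg) := by
    rw [Matrix.submatrix_submatrix, hfeq, hgeq]
  rw [h1, Matrix.rank_submatrix]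

lemma card_image_univ {f : Fin r → Fin a} (hf : Function.Injective f) :
    (Finset.image f Finset.univ).card = r := by
  rw [Finset.card_image_of_injective _ hf, Finset.card_univ, Fintype.card_fin]

lemma range_orderEmbOfFin_image {f : Fin r → Fin a} (hf : Function.Injective f) :
    Set.range ((Finset.image f Finset.univ).orderEmbOfFin (card_image_univ hf)) = Set.range f := by
  rw [Finset.range_orderEmbOfFin]
  ext j
  simp [Finset.mem_coe, Finset.mem_image]

/-- every rank-r matrix has an invertible r×r submatrix at some (T,S) location -/
lemma exists_TS (H : Matrix (Fin a) (Fin b) F2) (h : H.rank = r) :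
    ∃ (T : Finset (Fin a)) (S : Finset (Fin b)) (hT : T.card = r) (hS : S.card = r),
      (H.submatrix (T.orderEmbOfFin hT) (S.orderEmbOfFin hS)).rank = r := by
  obtain ⟨f, g, hfinj, hginj, hrank⟩ := exists_fullrank_sub H h
  refine ⟨Finset.image f Finset.univ, Finset.image g Finset.univ,
    card_image_univ hfinj, card_image_univ hginj, ?_⟩
  rw [rank_sub_congr H hfinj ((Finset.image f Finset.univ).orderEmbOfFin
      (card_image_univ hfinj)).injective hginj
      ((Finset.image g Finset.univ).orderEmbOfFin (card_image_univ hginj)).injective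
      (range_orderEmbOfFin_image hfinj) (range_orderEmbOfFin_image hginj)]
  exact hrank

end Lemma5Aux

namespace Lemma5Aux
open Matrix Finset Module Submodule

variable {K K' r : ℕ}

lemma phi_props {P : Matrix (Fin r) (Fin K') F2} {Q : Matrix (Fin K) (Fin r) F2}
    {G G' : Matrix (Fin r) (Fin r) F2} (hG : IsUnit G) (hG' : IsUnit G')
    {H : Matrix (Fin K') (Fin K) F2} (hH : H.rank = r) (hsub : P * H * Q = G) :
    ((H * Q) * (G⁻¹ * G' * G⁻¹) * (P * H)).rank = r ∧
    P * ((H * Q) * (G⁻¹ * G' * G⁻¹) * (P * H)) * Q = G' ∧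
    ((((H * Q) * (G⁻¹ * G' * G⁻¹) * (P * H)) * Q) * (G'⁻¹ * G * G'⁻¹) *
      (P * ((H * Q) * (G⁻¹ * G' * G⁻¹) * (P * H)))) = H ∧
    (∀ (P₂ : Matrix (Fin r) (Fin K') F2) (Q₂ : Matrix (Fin K) (Fin r) F2),
      (P₂ * ((H * Q) * (G⁻¹ * G' * G⁻¹) * (P * H)) * Q₂).rank = r ↔
      (P₂ * H * Q₂).rank = r) := by
  have hdet : IsUnit G.det := (Matrix.isUnit_iff_isUnit_det _).1 hG
  have hdet' : IsUnit G'.det := (Matrix.isUnit_iff_isUnit_det _).1 hG'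
  have hinv : IsUnit G⁻¹ := Matrix.isUnit_nonsing_inv_iff.2 hG
  have hinv' : IsUnit G'⁻¹ := Matrix.isUnit_nonsing_inv_iff.2 hG'
  set C := H * Q with hC
  set R := P * H with hR
  have hB : IsUnit (G⁻¹ * G' * G⁻¹) := (hinv.mul hG').mul hinv
  have hPC : P * C = G := by rw [hC, ← Matrix.mul_assoc]; exact hsub
  have hRQ : R * Q = G := by rw [hR]; exact hsub
  have hle : H.rank ≤ r := le_of_eq hH
  have hrec : H = C * (G⁻¹ * R) := by
    have := recon (r := r) hle (by rw [hsub]; exact hG)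
    rw [hsub] at this
    exact this
  have hsub' : P * (C * (G⁻¹ * G' * G⁻¹) * R) * Q = G' := by
    calc P * (C * (G⁻¹ * G' * G⁻¹) * R) * Q = (P * C) * ((G⁻¹ * G' * G⁻¹) * (R * Q)) := by
          simp only [Matrix.mul_assoc]
      _ = G * ((G⁻¹ * G' * G⁻¹) * G) := by rw [hPC, hRQ]
      _ = G' := by
          simp only [Matrix.mul_assoc, Matrix.mul_nonsing_inv_cancel_left _ _ hdet,
            Matrix.nonsing_inv_mul_cancel_right _ _ hdet]
  have hrank' : (C * (G⁻¹ * G' * G⁻¹) * R).rank = r := by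
    refine le_antisymm ?_ ?_
    · calc (C * (G⁻¹ * G' * G⁻¹) * R).rank ≤ (C * (G⁻¹ * G' * G⁻¹)).rank :=
            Matrix.rank_mul_le_left _ _
        _ ≤ C.rank := Matrix.rank_mul_le_left _ _
        _ ≤ H.rank := Matrix.rank_mul_le_left _ _
        _ ≤ r := hle
    · have h1 := rank_PHQ_le P (C * (G⁻¹ * G' * G⁻¹) * R) Q
      rw [hsub', Matrix.rank_of_isUnit _ hG', Fintype.card_fin] at h1
      exact h1
  refine ⟨hrank', hsub', ?_, ?_⟩
  · have h1 : (C * (G⁻¹ * G' * G⁻¹) * R) * Q = C * ((G⁻¹ * G' * G⁻¹) * G) := by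
      simp only [Matrix.mul_assoc]; rw [hRQ]
    have h2 : P * (C * (G⁻¹ * G' * G⁻¹) * R) = G * ((G⁻¹ * G' * G⁻¹) * R) := by
      calc P * (C * (G⁻¹ * G' * G⁻¹) * R) = (P * C) * ((G⁻¹ * G' * G⁻¹) * R) := by
            simp only [Matrix.mul_assoc]
        _ = G * ((G⁻¹ * G' * G⁻¹) * R) := by rw [hPC]
    rw [h1, h2, hrec]
    simp only [Matrix.mul_assoc,
      Matrix.mul_nonsing_inv_cancel_left _ _ hdet,
      Matrix.nonsing_inv_mul_cancel_left _ _ hdet,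
      Matrix.mul_nonsing_inv_cancel_left _ _ hdet',
      Matrix.nonsing_inv_mul_cancel_left _ _ hdet']
  · intro P₂ Q₂
    rw [rank_sandwich_iff C R _ hB P₂ Q₂]
    conv_rhs => rw [hrec, show C * (G⁻¹ * R) = C * G⁻¹ * R from (Matrix.mul_assoc _ _ _).symm]
    rw [rank_sandwich_iff C R _ hinv P₂ Q₂]

end Lemma5Aux

/-- `N a b i` is the number of `a × b` matrices over `F₂` of rank `i`. -/
noncomputable def rankCount (a b i : ℕ) : ℕ :=
  {H : Matrix (Fin a) (Fin b) (ZMod 2) | H.rank = i}.ncard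

namespace Lemma5Aux
open Matrix Finset Module Submodule

variable {K K' r : ℕ}

lemma fullRankPairs_congr {H H' : Matrix (Fin K') (Fin K) F2}
    (h : ∀ (P₂ : Matrix (Fin r) (Fin K') F2) (Q₂ : Matrix (Fin K) (Fin r) F2),
      (P₂ * H' * Q₂).rank = r ↔ (P₂ * H * Q₂).rank = r) :
    fullRankPairs K K' r H' = fullRankPairs K K' r H := by
  ext TS
  simp only [fullRankPairs, Set.mem_setOf_eq]
  constructor <;> rintro ⟨hT, hS, hrk⟩ <;> refine ⟨hT, hS, ?_⟩
  · rw [sub_eq] at hrk ⊢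
    exact (h _ _).1 hrk
  · rw [sub_eq] at hrk ⊢
    exact (h _ _).2 hrk

open Classical in
lemma inner_sum_const {G G' : Matrix (Fin r) (Fin r) F2} (hG : IsUnit G) (hG' : IsUnit G')
    (TS : Finset (Fin K') × Finset (Fin K)) (hT : TS.1.card = r) (hS : TS.2.card = r) :
    ∑ H ∈ Finset.univ.filter (fun H : Matrix (Fin K') (Fin K) F2 =>
          H.rank = r ∧ ∃ (hT : TS.1.card = r) (hS : TS.2.card = r),
            H.submatrix (TS.1.orderEmbOfFin hT) (TS.2.orderEmbOfFin hS) = G),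
        (1 : ℝ) / (fullRankPairs K K' r H).ncard
    = ∑ H ∈ Finset.univ.filter (fun H : Matrix (Fin K') (Fin K) F2 =>
          H.rank = r ∧ ∃ (hT : TS.1.card = r) (hS : TS.2.card = r),
            H.submatrix (TS.1.orderEmbOfFin hT) (TS.2.orderEmbOfFin hS) = G'),
        (1 : ℝ) / (fullRankPairs K K' r H).ncard := by
  set eT : Fin r → Fin K' := ⇑(TS.1.orderEmbOfFin hT) with heT
  set eS : Fin r → Fin K := ⇑(TS.2.orderEmbOfFin hS) with heS
  set P : Matrix (Fin r) (Fin K') F2 := rowSel eT with hP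
  set Q : Matrix (Fin K) (Fin r) F2 := colSel eS with hQ
  have hkey : ∀ (G₁ G₂ : Matrix (Fin r) (Fin r) F2), IsUnit G₁ → IsUnit G₂ →
      ∀ H : Matrix (Fin K') (Fin K) F2, (H.rank = r ∧ ∃ (hT' : TS.1.card = r)
        (hS' : TS.2.card = r), H.submatrix (TS.1.orderEmbOfFin hT') (TS.2.orderEmbOfFin hS') = G₁) →
      (((H * Q) * (G₁⁻¹ * G₂ * G₁⁻¹) * (P * H)).rank = r ∧
        ∃ (hT' : TS.1.card = r) (hS' : TS.2.card = r),
          ((H * Q) * (G₁⁻¹ * G₂ * G₁⁻¹) * (P * H)).submatrix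
            (TS.1.orderEmbOfFin hT') (TS.2.orderEmbOfFin hS') = G₂) ∧
      ((((H * Q) * (G₁⁻¹ * G₂ * G₁⁻¹) * (P * H)) * Q) * (G₂⁻¹ * G₁ * G₂⁻¹) *
          (P * ((H * Q) * (G₁⁻¹ * G₂ * G₁⁻¹) * (P * H)))) = H ∧
      fullRankPairs K K' r ((H * Q) * (G₁⁻¹ * G₂ * G₁⁻¹) * (P * H)) = fullRankPairs K K' r H := by
    intro G₁ G₂ hG₁ hG₂ H ⟨hrank, hT', hS', hsubm⟩
    have hsub : P * H * Q = G₁ := by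
      rw [hP, hQ, ← sub_eq]
      exact hsubm
    obtain ⟨c1, c2, c3, c4⟩ := phi_props hG₁ hG₂ hrank hsub
    refine ⟨⟨c1, hT, hS, ?_⟩, c3, fullRankPairs_congr c4⟩
    rw [sub_eq]
    exact c2
  refine Finset.sum_nbij' (fun H => (H * Q) * (G⁻¹ * G' * G⁻¹) * (P * H))
    (fun H => (H * Q) * (G'⁻¹ * G * G'⁻¹) * (P * H)) ?_ ?_ ?_ ?_ ?_
  · intro H hH
    rw [Finset.mem_filter] at hH ⊢
    exact ⟨Finset.mem_univ _, (hkey G G' hG hG' H hH.2).1⟩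
  · intro H hH
    rw [Finset.mem_filter] at hH ⊢
    exact ⟨Finset.mem_univ _, (hkey G' G hG' hG H hH.2).1⟩
  · intro H hH
    rw [Finset.mem_filter] at hH
    obtain ⟨hmem, hinv, -⟩ := hkey G G' hG hG' H hH.2
    exact hinv
  · intro H hH
    rw [Finset.mem_filter] at hH
    obtain ⟨hmem, hinv, -⟩ := hkey G' G hG' hG H hH.2
    exact hinv
  · intro H hH
    rw [Finset.mem_filter] at hH
    obtain ⟨-, -, hV⟩ := hkey G G' hG hG' H hH.2
    rw [hV]

end Lemma5Aux

namespace Lemma5Aux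
open Matrix Finset Module Submodule

variable {K K' r : ℕ}

open Classical in
lemma ncard_eq_card_filter (H : Matrix (Fin K') (Fin K) F2) :
    (fullRankPairs K K' r H).ncard
      = (Finset.univ.filter (· ∈ fullRankPairs K K' r H)).card := by
  have h : fullRankPairs K K' r H
      = ↑(Finset.univ.filter (· ∈ fullRankPairs K K' r H)) := by ext TS; simp
  conv_lhs => rw [h]
  exact Set.ncard_coe_finset _

open Classical in
lemma step_fiber (TS : Finset (Fin K') × Finset (Fin K)) (hT : TS.1.card = r)
    (hS : TS.2.card = r) :
    ∑ G' ∈ Finset.univ.filter (fun A : Matrix (Fin r) (Fin r) F2 => IsUnit A),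
      ∑ H ∈ Finset.univ.filter (fun H : Matrix (Fin K') (Fin K) F2 =>
          H.rank = r ∧ ∃ (hT : TS.1.card = r) (hS : TS.2.card = r),
            H.submatrix (TS.1.orderEmbOfFin hT) (TS.2.orderEmbOfFin hS) = G'),
        (1 : ℝ) / (fullRankPairs K K' r H).ncard
    = ∑ H ∈ Finset.univ.filter (fun H : Matrix (Fin K') (Fin K) F2 =>
          H.rank = r ∧ TS ∈ fullRankPairs K K' r H),
        (1 : ℝ) / (fullRankPairs K K' r H).ncard := by
  rw [← Finset.sum_fiberwise_of_maps_to (g := fun H : Matrix (Fin K') (Fin K) F2 =>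
      H.submatrix (TS.1.orderEmbOfFin hT) (TS.2.orderEmbOfFin hS)) ?_
      (fun H => (1 : ℝ) / (fullRankPairs K K' r H).ncard)]
  · apply Finset.sum_congr rfl
    intro G' hG'
    rw [Finset.mem_filter] at hG'
    have hG'u : IsUnit G' := hG'.2
    congr 1
    ext H
    simp only [Finset.mem_filter, Finset.mem_univ, true_and]
    constructor
    · rintro ⟨hrank, hT', hS', hsub⟩
      refine ⟨⟨hrank, (⟨hT, hS, ?_⟩ : TS ∈ fullRankPairs K K' r H)⟩, hsub⟩
      rw [hsub, Matrix.rank_of_isUnit _ hG'u, Fintype.card_fin]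
    · rintro ⟨⟨hrank, -⟩, hsub⟩
      exact ⟨hrank, hT, hS, hsub⟩
  · intro H hH
    rw [Finset.mem_filter] at hH
    obtain ⟨-, hrank, hmem⟩ := hH
    obtain ⟨hT', hS', hrk⟩ := hmem
    rw [Finset.mem_filter]
    exact ⟨Finset.mem_univ _, isUnit_of_rank_eq _ hrk⟩

open Classical in
lemma step_swap (hr : 0 < r) :
    ∑ TS ∈ Finset.univ.filter (fun TS : Finset (Fin K') × Finset (Fin K) =>
        TS.1.card = r ∧ TS.2.card = r),
      ∑ H ∈ Finset.univ.filter (fun H : Matrix (Fin K') (Fin K) F2 =>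
          H.rank = r ∧ TS ∈ fullRankPairs K K' r H),
        (1 : ℝ) / (fullRankPairs K K' r H).ncard
    = ((Finset.univ.filter (fun H : Matrix (Fin K') (Fin K) F2 => H.rank = r)).card : ℝ) := by
  rw [Finset.sum_subset (Finset.filter_subset _ Finset.univ)]
  swap
  · intro TS _ hTS
    rw [Finset.mem_filter, not_and] at hTS
    have : Finset.univ.filter (fun H : Matrix (Fin K') (Fin K) F2 =>
        H.rank = r ∧ TS ∈ fullRankPairs K K' r H) = ∅ := by
      rw [Finset.filter_eq_empty_iff]
      rintro H - ⟨-, hT', hS', -⟩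
      exact hTS (Finset.mem_univ TS) ⟨hT', hS'⟩
    rw [this, Finset.sum_empty]
  rw [Finset.sum_congr rfl (fun TS _ => Finset.sum_filter
    (fun H : Matrix (Fin K') (Fin K) F2 => H.rank = r ∧ TS ∈ fullRankPairs K K' r H)
    (fun H => (1 : ℝ) / (fullRankPairs K K' r H).ncard))]
  rw [Finset.sum_comm]
  have hinner : ∀ H : Matrix (Fin K') (Fin K) F2,
      (∑ TS : Finset (Fin K') × Finset (Fin K),
        if H.rank = r ∧ TS ∈ fullRankPairs K K' r H
        then (1 : ℝ) / (fullRankPairs K K' r H).ncard else 0)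
      = if H.rank = r then 1 else 0 := by
    intro H
    by_cases hrank : H.rank = r
    · rw [if_pos hrank]
      have h1 : ∀ TS : Finset (Fin K') × Finset (Fin K),
          (H.rank = r ∧ TS ∈ fullRankPairs K K' r H) ↔ TS ∈ fullRankPairs K K' r H := by
        intro TS; simp [hrank]
      rw [Finset.sum_congr rfl (fun TS _ => by rw [if_congr (h1 TS) rfl rfl])]
      rw [← Finset.sum_filter, Finset.sum_const, ← ncard_eq_card_filter]
      have hpos : 0 < (fullRankPairs K K' r H).ncard := by
        obtain ⟨T, S, hT, hS, hrk⟩ := exists_TS H hrank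
        rw [ncard_eq_card_filter]
        apply Finset.card_pos.2
        exact ⟨(T, S), by simp only [Finset.mem_filter, Finset.mem_univ, true_and]; exact ⟨hT, hS, hrk⟩⟩
      rw [nsmul_eq_mul, mul_one_div, div_self]
      exact_mod_cast hpos.ne'
    · rw [if_neg hrank]
      apply Finset.sum_eq_zero
      intro TS _
      rw [if_neg (by tauto)]
  rw [Finset.sum_congr rfl (fun H _ => hinner H)]
  rw [Finset.sum_boole]

end Lemma5Aux


namespace Lemma5Aux
open Matrix Finset Module Submodule

open Classical in
lemma rankCount_eq_card (a b i : ℕ) :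
    rankCount a b i = (Finset.univ.filter
      (fun H : Matrix (Fin a) (Fin b) (ZMod 2) => H.rank = i)).card := by
  have h : {H : Matrix (Fin a) (Fin b) (ZMod 2) | H.rank = i}
      = ↑(Finset.univ.filter (fun H : Matrix (Fin a) (Fin b) (ZMod 2) => H.rank = i)) := by
    ext H; simp
  rw [rankCount]
  conv_lhs => rw [h]
  exact Set.ncard_coe_finset _

open Classical in
lemma card_units_eq (r : ℕ) :
    (Finset.univ.filter (fun A : Matrix (Fin r) (Fin r) (ZMod 2) => IsUnit A)).card
      = rankCount r r r := by
  rw [rankCount_eq_card]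
  apply congrArg Finset.card
  ext A
  simp only [Finset.mem_filter, Finset.mem_univ, true_and]
  constructor
  · intro h
    rw [Matrix.rank_of_isUnit _ h, Fintype.card_fin]
  · exact isUnit_of_rank_eq A

end Lemma5Aux

open Finset Classical in
/-- The combinatorial content of Lemma 5 of the paper: for an invertible `r × r`
matrix `G` over `F₂`, summing `1/|V(H)|` over all locations `(T, S)` and all
rank-`r` matrices `H` containing `G` at that location gives
`N_{K',K}(r) / N_{r,r}(r)`. -/
theorem sum_sum_inv_ncard_fullRankPairs (K K' r : ℕ)
    (hK : 0 < K) (hK' : 0 < K') (hr : 0 < r) (hrK : r ≤ K) (hrK' : r ≤ K')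
    (G : Matrix (Fin r) (Fin r) (ZMod 2)) (hG : IsUnit G) :
    ∑ TS ∈ univ.filter (fun TS : Finset (Fin K') × Finset (Fin K) =>
        TS.1.card = r ∧ TS.2.card = r),
      ∑ H ∈ univ.filter (fun H : Matrix (Fin K') (Fin K) (ZMod 2) =>
          H.rank = r ∧ ∃ (hT : TS.1.card = r) (hS : TS.2.card = r),
            H.submatrix (TS.1.orderEmbOfFin hT) (TS.2.orderEmbOfFin hS) = G),
        (1 : ℝ) / (fullRankPairs K K' r H).ncard
    = (rankCount K' K r : ℝ) / (rankCount r r r : ℝ) := by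
  classical
  open Lemma5Aux in
  rw [Lemma5Aux.rankCount_eq_card K' K r, ← Lemma5Aux.card_units_eq r]
  set A := univ.filter (fun TS : Finset (Fin K') × Finset (Fin K) =>
      TS.1.card = r ∧ TS.2.card = r) with hA
  set U := univ.filter (fun A : Matrix (Fin r) (Fin r) (ZMod 2) => IsUnit A) with hUdef
  set X := ∑ TS ∈ A,
      ∑ H ∈ univ.filter (fun H : Matrix (Fin K') (Fin K) (ZMod 2) =>
          H.rank = r ∧ ∃ (hT : TS.1.card = r) (hS : TS.2.card = r),
            H.submatrix (TS.1.orderEmbOfFin hT) (TS.2.orderEmbOfFin hS) = G),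
        (1 : ℝ) / (fullRankPairs K K' r H).ncard with hX
  have hconst : ∀ G' ∈ U, (∑ TS ∈ A,
      ∑ H ∈ univ.filter (fun H : Matrix (Fin K') (Fin K) (ZMod 2) =>
          H.rank = r ∧ ∃ (hT : TS.1.card = r) (hS : TS.2.card = r),
            H.submatrix (TS.1.orderEmbOfFin hT) (TS.2.orderEmbOfFin hS) = G'),
        (1 : ℝ) / (fullRankPairs K K' r H).ncard) = X := by
    intro G' hG'
    rw [hUdef, Finset.mem_filter] at hG'
    apply Finset.sum_congr rfl
    intro TS hTS
    rw [hA, Finset.mem_filter] at hTS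
    exact Lemma5Aux.inner_sum_const hG'.2 hG TS hTS.2.1 hTS.2.2
  have h2 : (∑ G' ∈ U, ∑ TS ∈ A,
      ∑ H ∈ univ.filter (fun H : Matrix (Fin K') (Fin K) (ZMod 2) =>
          H.rank = r ∧ ∃ (hT : TS.1.card = r) (hS : TS.2.card = r),
            H.submatrix (TS.1.orderEmbOfFin hT) (TS.2.orderEmbOfFin hS) = G'),
        (1 : ℝ) / (fullRankPairs K K' r H).ncard) = U.card • X := by
    rw [Finset.sum_congr rfl hconst, Finset.sum_const]
  have h3 : (∑ G' ∈ U, ∑ TS ∈ A,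
      ∑ H ∈ univ.filter (fun H : Matrix (Fin K') (Fin K) (ZMod 2) =>
          H.rank = r ∧ ∃ (hT : TS.1.card = r) (hS : TS.2.card = r),
            H.submatrix (TS.1.orderEmbOfFin hT) (TS.2.orderEmbOfFin hS) = G'),
        (1 : ℝ) / (fullRankPairs K K' r H).ncard)
      = ∑ TS ∈ A, ∑ G' ∈ U,
      ∑ H ∈ univ.filter (fun H : Matrix (Fin K') (Fin K) (ZMod 2) =>
          H.rank = r ∧ ∃ (hT : TS.1.card = r) (hS : TS.2.card = r),
            H.submatrix (TS.1.orderEmbOfFin hT) (TS.2.orderEmbOfFin hS) = G'),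
        (1 : ℝ) / (fullRankPairs K K' r H).ncard := Finset.sum_comm
  have h4 : (∑ TS ∈ A, ∑ G' ∈ U,
      ∑ H ∈ univ.filter (fun H : Matrix (Fin K') (Fin K) (ZMod 2) =>
          H.rank = r ∧ ∃ (hT : TS.1.card = r) (hS : TS.2.card = r),
            H.submatrix (TS.1.orderEmbOfFin hT) (TS.2.orderEmbOfFin hS) = G'),
        (1 : ℝ) / (fullRankPairs K K' r H).ncard)
      = ∑ TS ∈ A, ∑ H ∈ univ.filter (fun H : Matrix (Fin K') (Fin K) (ZMod 2) =>
          H.rank = r ∧ TS ∈ fullRankPairs K K' r H),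
        (1 : ℝ) / (fullRankPairs K K' r H).ncard := by
    apply Finset.sum_congr rfl
    intro TS hTS
    rw [hA, Finset.mem_filter] at hTS
    exact Lemma5Aux.step_fiber TS hTS.2.1 hTS.2.2
  have h5 := Lemma5Aux.step_swap (K := K) (K' := K') hr
  have hcard : (U.card : ℝ) * X =
      ((univ.filter (fun H : Matrix (Fin K') (Fin K) (ZMod 2) => H.rank = r)).card : ℝ) := by
    rw [← nsmul_eq_mul, ← h2, h3, h4]
    rw [hA] at *
    exact h5
  have hUpos : 0 < U.card := by
    apply Finset.card_pos.2
    exact ⟨1, by simp [hUdef]⟩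
  rw [eq_div_iff (by exact_mod_cast hUpos.ne')]
  rw [← hcard]
  ring
end
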